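/- In the polar code factor graph G_N (N = 2^n, with possible bottom rows removed by the SEF algorithm), every nonempty stopping set contains all variable nodes of at least one complete row of the graph, i.e., there exists a row index i such that the variable nodes at row i in all n+1 columns belong to the stopping set. -/

import Mathlib

/-- Adjacency in the polar factor graph on `N` rows (`N ≤ 2^n`; the case `N < 2^n`
models the bottom rows being removed by the SEF algorithm while preserving the edge
structure).  The CN at column `m`, row `i` connects horizontally to the VNs at columns
`m` and `m+1` in row `i`; in addition, a slanted edge connects it to the degree-3 VN at
column `m+1` in the strictly larger row `i + h` (with `h = 2^(n-1-m)`), when that row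
exists. -/
def polarAdj (n N : ℕ) (c : Fin n × Fin N) (v : Fin (n + 1) × Fin N) : Prop :=
  (v.1.val = c.1.val ∧ v.2 = c.2) ∨
  (v.1.val = c.1.val + 1 ∧ v.2 = c.2) ∨
  (v.1.val = c.1.val + 1 ∧ c.2.val % (2 * 2 ^ (n - 1 - c.1.val)) < 2 ^ (n - 1 - c.1.val) ∧
    v.2.val = c.2.val + 2 ^ (n - 1 - c.1.val))

/-- A stopping set: a set of variable nodes such that every check node adjacent to a
node of the set has at least two neighbors in the set. -/
def IsStoppingSet (n N : ℕ) (ψ : Set (Fin (n + 1) × Fin N)) : Prop :=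
  ∀ c v, v ∈ ψ → polarAdj n N c v → ∃ w ∈ ψ, w ≠ v ∧ polarAdj n N c w

/-- Full-row property: in the polar factor graph `G_N` (`N = 2^n`, possibly with bottom
rows removed by the SEF algorithm, i.e. `N ≤ 2^n`), every nonempty stopping set contains
all variable nodes of at least one complete row: there is a row index `i` such that the
variable nodes at row `i` in all `n+1` columns belong to the stopping set. -/
theorem stopping_set_full_row (n N : ℕ) (hN : N ≤ 2 ^ n)
    (ψ : Set (Fin (n + 1) × Fin N)) (hψ : IsStoppingSet n N ψ) (hne : ψ.Nonempty) :
    ∃ i : Fin N, ∀ m : Fin (n + 1), (m, i) ∈ ψ := by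
  -- Pick an element of ψ whose row index is maximal.
  obtain ⟨a, ha, hamax⟩ :=
    Set.Finite.exists_maximalFor (fun p => p.2.val) ψ (Set.toFinite ψ) hne
  set i0 := a.2 with hi0
  have hmax : ∀ p ∈ ψ, p.2.val ≤ i0.val := by
    intro p hp
    by_contra h
    push_neg at h
    have : p.2.val ≤ a.2.val := hamax hp (le_of_lt h)
    omega
  -- Rightward propagation: from any node in ψ we reach a column-n node in a row ≥ i.
  have hright : ∀ k (m : Fin (n + 1)) (i : Fin N), n - m.val = k → (m, i) ∈ ψ →
      ∃ j : Fin N, i.val ≤ j.val ∧ ((⟨n, Nat.lt_succ_self n⟩ : Fin (n + 1)), j) ∈ ψ := by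
    intro k
    induction k with
    | zero =>
      intro m i hm hmem
      have hmn : m.val = n := by have := m.isLt; omega
      have hme : m = ⟨n, Nat.lt_succ_self n⟩ := Fin.ext hmn
      exact ⟨i, le_refl _, by rwa [hme] at hmem⟩
    | succ k ih =>
      intro m i hm hmem
      have hmn : m.val < n := by omega
      have hadj : polarAdj n N (⟨m.val, hmn⟩, i) (m, i) := Or.inl ⟨rfl, rfl⟩
      obtain ⟨w, hw, hwne, hwadj⟩ := hψ _ _ hmem hadj
      have hw' : (w.1, w.2) ∈ ψ := by rwa [Prod.mk.eta]
      rcases hwadj with ⟨h1, h2⟩ | ⟨h1, h2⟩ | ⟨h1, _, h3⟩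
      · exact absurd (Prod.ext (Fin.ext h1) h2) hwne
      · have h1' : w.1.val = m.val + 1 := h1
        have hk : n - w.1.val = k := by omega
        obtain ⟨j, hj1, hj2⟩ := ih w.1 w.2 hk hw'
        exact ⟨j, by rw [h2] at hj1; exact hj1, hj2⟩
      · have h1' : w.1.val = m.val + 1 := h1
        have h3' : w.2.val = i.val + 2 ^ (n - 1 - m.val) := h3
        have hk : n - w.1.val = k := by omega
        obtain ⟨j, hj1, hj2⟩ := ih w.1 w.2 hk hw'
        have hiw : i.val ≤ w.2.val := h3' ▸ Nat.le_add_right _ _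
        exact ⟨j, le_trans hiw hj1, hj2⟩
  -- Apply it to the maximal-row element: the top row of column n is in ψ.
  obtain ⟨j, hji, hjψ⟩ := hright (n - a.1.val) a.1 a.2 rfl (by rwa [Prod.mk.eta])
  have hji' : j = i0 := Fin.ext (le_antisymm (hmax _ hjψ) hji)
  rw [hji'] at hjψ
  -- Downward (leftward) propagation along the maximal row.
  have hdown : ∀ k, k ≤ n → (∀ h : n - k < n + 1,
      ((⟨n - k, h⟩ : Fin (n + 1)), i0) ∈ ψ) := by
    intro k
    induction k with
    | zero =>
      intro _ h
      have : (⟨n - 0, h⟩ : Fin (n + 1)) = ⟨n, Nat.lt_succ_self n⟩ := Fin.ext (Nat.sub_zero n)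
      rwa [this]
    | succ k ih =>
      intro hk h
      have hkn : k ≤ n := by omega
      have hprev := ih hkn (by omega)
      have hcn : n - (k + 1) < n := by omega
      have hadj : polarAdj n N ((⟨n - (k + 1), hcn⟩ : Fin n), i0)
          ((⟨n - k, by omega⟩ : Fin (n + 1)), i0) := by
        exact Or.inr (Or.inl ⟨(by omega : n - k = n - (k + 1) + 1), rfl⟩)
      obtain ⟨w, hw, hwne, hwadj⟩ := hψ _ _ hprev hadj
      rcases hwadj with ⟨h1, h2⟩ | ⟨h1, h2⟩ | ⟨h1, _, h3⟩
      · have h1' : w.1.val = n - (k + 1) := h1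
        have : w = ((⟨n - (k + 1), h⟩ : Fin (n + 1)), i0) :=
          Prod.ext (Fin.ext h1') h2
        rwa [this] at hw
      · exfalso
        apply hwne
        have h1' : w.1.val = n - (k + 1) + 1 := h1
        have hwe : w.1 = (⟨n - k, by omega⟩ : Fin (n + 1)) :=
          Fin.ext (show w.1.val = n - k by omega)
        exact Prod.ext hwe h2
      · exfalso
        have h3' : w.2.val = i0.val + 2 ^ (n - 1 - (n - (k + 1))) := h3
        have hpos : 0 < 2 ^ (n - 1 - (n - (k + 1))) := Nat.pow_pos (by norm_num)
        have hle := hmax w hw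
        omega
  refine ⟨i0, fun m => ?_⟩
  have hm := hdown (n - m.val) (by omega) (by omega)
  have : m = (⟨n - (n - m.val), by omega⟩ : Fin (n + 1)) :=
    Fin.ext (by have := m.isLt; omega : m.val = n - (n - m.val))
  rwa [this]
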